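/- Let $\mathit{\Gamma}$ be a connected digraph with at least one arc, let $H$ be a finite group acting on $\mathit{\Gamma}$ by automorphisms, and suppose $\mathit{\Gamma}$ is $H$-vertex-transitive and $(H,k)$-arc-transitive for every $k$ with $1 \leq k \leq s$, where $s \geq 2$. Let $L$ be a normal subgroup of $H$ that is transitive on the vertex set, let $v$ be a vertex, and suppose $L_v$ has a normal subgroup $A$ isomorphic to $\mathrm{C}_m \times \mathrm{C}_m$ for some integer $m \geq 2$. If there exists a prime divisor $r$ of $m$ such that $r$ does not divide the index $[L_v : A]$ and $v_r(|H|/|L|) < v_r(m)$ (where $v_r$ denotes the $r$-adic valuation), then $s \leq 2$. -/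

import Mathlib

/-! ### Auxiliary number-theoretic helpers -/

private lemma nu_le_of_dvd (p : ℕ) {d n : ℕ} (hd : d ∣ n) (hn : n ≠ 0) :
    d.factorization p ≤ n.factorization p := by
  have hd0 : d ≠ 0 := by
    rintro rfl
    exact hn (Nat.eq_zero_of_zero_dvd hd)
  exact Finsupp.le_def.1 ((Nat.factorization_le_iff_dvd hd0 hn).2 hd) p

private lemma nu_pow {p : ℕ} (hp : p.Prime) (k : ℕ) : (p ^ k).factorization p = k := by
  simp [hp.factorization_pow]

private lemma card_eq_pow_nu {p n k : ℕ} (hp : p.Prime) (h : n ∣ p ^ k) :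
    n = p ^ (n.factorization p) := by
  obtain ⟨i, hik, rfl⟩ := (Nat.dvd_prime_pow hp).1 h
  rw [nu_pow hp i]

private lemma nu_mul (p : ℕ) {x y : ℕ} (hx : x ≠ 0) (hy : y ≠ 0) :
    (x * y).factorization p = x.factorization p + y.factorization p := by
  rw [Nat.factorization_mul hx hy]; simp

/-! ### ZMod cardinality helpers -/

section ZModHelpers

variable (m : ℕ) [NeZero m]

private lemma card_ker_mulLeft (n : ℕ) (hn : n ∣ m) :
    Nat.card ((AddMonoidHom.mulLeft (n : ZMod m)).ker) = n := by
  have hm : (m : ℕ) ≠ 0 := NeZero.ne m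
  set f := AddMonoidHom.mulLeft (n : ZMod m) with hf
  have hrange : f.range = AddSubgroup.zmultiples ((n : ZMod m)) := by
    ext x
    simp only [AddMonoidHom.mem_range, AddSubgroup.mem_zmultiples_iff]
    constructor
    · rintro ⟨z, rfl⟩
      obtain ⟨k, rfl⟩ := ZMod.intCast_surjective (n := m) z
      exact ⟨k, by show k • (n : ZMod m) = (n : ZMod m) * (k : ZMod m); rw [zsmul_eq_mul]; ring⟩
    · rintro ⟨k, rfl⟩
      exact ⟨(k : ZMod m), by
        show (n : ZMod m) * (k : ZMod m) = k • (n : ZMod m); rw [zsmul_eq_mul]; ring⟩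
  have hcr : Nat.card f.range = m / n := by
    rw [hrange]
    rw [Nat.card_zmultiples]
    rw [ZMod.addOrderOf_coe _ hm, Nat.gcd_eq_right hn]
  have h1 : Nat.card (ZMod m) = Nat.card ((ZMod m) ⧸ f.ker) * Nat.card f.ker :=
    AddSubgroup.card_eq_card_quotient_mul_card_addSubgroup f.ker
  have h2 : Nat.card ((ZMod m) ⧸ f.ker) = Nat.card f.range :=
    Nat.card_congr (QuotientAddGroup.quotientKerEquivRange f).toEquiv
  rw [Nat.card_zmod, h2, hcr] at h1
  have hnpos : 0 < n := Nat.pos_of_dvd_of_pos hn (Nat.pos_of_ne_zero hm)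
  have hdiv : m / n * n = m := Nat.div_mul_cancel hn
  have hmn : 0 < m / n := Nat.div_pos (Nat.le_of_dvd (Nat.pos_of_ne_zero hm) hn) hnpos
  nlinarith [h1, hdiv]

private lemma card_map_mulLeft_ker (n n' : ℕ) (hn : n ∣ m) (hd : n' ∣ n) :
    Nat.card ((AddMonoidHom.mulLeft (n : ZMod m)).ker.map
      (AddMonoidHom.mulLeft ((n' : ZMod m)))) * n' = n := by
  set Ta := (AddMonoidHom.mulLeft (n : ZMod m)).ker with hTa
  set Tb := (AddMonoidHom.mulLeft ((n' : ZMod m))).ker with hTb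
  have hle : Tb ≤ Ta := by
    intro z hz
    have hz' : (n' : ZMod m) * z = 0 := hz
    obtain ⟨k, hk⟩ := hd
    show ((n : ℕ) : ZMod m) * z = 0
    rw [hk]
    push_cast
    rw [mul_comm (n' : ZMod m) (k : ZMod m), mul_assoc, hz', mul_zero]
  set g := (AddMonoidHom.mulLeft ((n' : ZMod m))).comp Ta.subtype with hg
  have hker : Nat.card g.ker = Nat.card Tb := by
    have : g.ker = Tb.addSubgroupOf Ta := by
      ext ⟨z, hz⟩
      show (n' : ZMod m) * z = 0 ↔ _
      simp [AddSubgroup.mem_addSubgroupOf, hTb, AddMonoidHom.mem_ker]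
    rw [this]
    exact Nat.card_congr (AddSubgroup.addSubgroupOfEquivOfLe hle).toEquiv
  have hrange : g.range = Ta.map (AddMonoidHom.mulLeft ((n' : ZMod m))) := by
    ext x
    simp only [AddMonoidHom.mem_range, AddSubgroup.mem_map, hg, AddMonoidHom.coe_comp,
      Function.comp_apply, AddSubgroup.coe_subtype]
    constructor
    · rintro ⟨⟨z, hz⟩, rfl⟩; exact ⟨z, hz, rfl⟩
    · rintro ⟨z, hz, rfl⟩; exact ⟨⟨z, hz⟩, rfl⟩
  have h1 : Nat.card Ta = Nat.card (Ta ⧸ g.ker) * Nat.card g.ker :=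
    AddSubgroup.card_eq_card_quotient_mul_card_addSubgroup g.ker
  have h2 : Nat.card (Ta ⧸ g.ker) = Nat.card g.range :=
    Nat.card_congr (QuotientAddGroup.quotientKerEquivRange g).toEquiv
  rw [h2, hker, hrange] at h1
  rw [card_ker_mulLeft m n hn, card_ker_mulLeft m n' (hd.trans hn)] at h1
  omega

end ZModHelpers

/-! ### Transport of torsion/power-image sets through isomorphisms -/

section Transport

variable {G₁ G₂ : Type*} [Group G₁] [Group G₂]

private def equivTors (e : G₁ ≃* G₂) (n : ℕ) : {y : G₁ // y ^ n = 1} ≃ {z : G₂ // z ^ n = 1} where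
  toFun y := ⟨e y.1, by rw [← map_pow, y.2, map_one]⟩
  invFun z := ⟨e.symm z.1, by rw [← map_pow, z.2, map_one]⟩
  left_inv y := by simp
  right_inv z := by simp

private def equivPowImage (e : G₁ ≃* G₂) (n n' : ℕ) :
    {y : G₁ // ∃ w, w ^ n = 1 ∧ y = w ^ n'} ≃ {z : G₂ // ∃ w, w ^ n = 1 ∧ z = w ^ n'} where
  toFun y := ⟨e y.1, by
    obtain ⟨w, hw, hyw⟩ := y.2
    exact ⟨e w, by rw [← map_pow, hw, map_one], by rw [hyw, map_pow]⟩⟩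
  invFun z := ⟨e.symm z.1, by
    obtain ⟨w, hw, hzw⟩ := z.2
    exact ⟨e.symm w, by rw [← map_pow, hw, map_one], by rw [hzw, map_pow]⟩⟩
  left_inv y := by simp
  right_inv z := by simp

end Transport

section TorsCard

variable (m : ℕ) [NeZero m]

private lemma card_mult_tors (n : ℕ) (hn : n ∣ m) :
    Nat.card {u : Multiplicative (ZMod m) // u ^ n = 1} = n := by
  have h1 : {u : Multiplicative (ZMod m) // u ^ n = 1}
      ≃ {z : ZMod m // (n : ZMod m) * z = 0} := by
    refine Equiv.subtypeEquiv Multiplicative.toAdd (fun u => ?_)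
    rw [show (1 : Multiplicative (ZMod m)) = Multiplicative.ofAdd 0 from rfl]
    rw [show u ^ n = Multiplicative.ofAdd (n • u.toAdd) from ?_]
    · constructor
      · intro h
        have := Multiplicative.ofAdd.injective h
        rw [← nsmul_eq_mul]; exact this
      · intro h
        congr 1
        rw [nsmul_eq_mul]; exact h
    · rw [← toAdd_pow]; rfl
  have h2 : {z : ZMod m // (n : ZMod m) * z = 0}
      ≃ ((AddMonoidHom.mulLeft (n : ZMod m)).ker) :=
    Equiv.subtypeEquivRight (fun z => Iff.rfl)
  rw [Nat.card_congr h1, Nat.card_congr h2, card_ker_mulLeft m n hn]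

private lemma card_mult_pow_image (n n' : ℕ) (hn : n ∣ m) (hd : n' ∣ n) :
    Nat.card {u : Multiplicative (ZMod m) // ∃ w, w ^ n = 1 ∧ u = w ^ n'} * n' = n := by
  have h1 : {u : Multiplicative (ZMod m) // ∃ w, w ^ n = 1 ∧ u = w ^ n'}
      ≃ {x : ZMod m // ∃ z, (n : ZMod m) * z = 0 ∧ x = (n' : ZMod m) * z} := by
    refine Equiv.subtypeEquiv Multiplicative.toAdd (fun u => ?_)
    constructor
    · rintro ⟨w, hw, rfl⟩
      refine ⟨w.toAdd, ?_, ?_⟩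
      · rw [← nsmul_eq_mul]
        have : (w ^ n).toAdd = n • w.toAdd := toAdd_pow w n
        rw [← this, hw]; rfl
      · rw [← nsmul_eq_mul]
        exact (toAdd_pow w n').symm ▸ rfl
    · rintro ⟨z, hz, hxz⟩
      refine ⟨Multiplicative.ofAdd z, ?_, ?_⟩
      · have : (Multiplicative.ofAdd z ^ n).toAdd = n • z := toAdd_pow _ n
        rw [show (1 : Multiplicative (ZMod m)) = Multiplicative.ofAdd 0 from rfl]
        apply Multiplicative.toAdd.injective
        rw [this]
        rw [nsmul_eq_mul]
        exact hz
      · apply Multiplicative.toAdd.injective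
        rw [toAdd_pow, nsmul_eq_mul]
        exact hxz
  have h2 : {x : ZMod m // ∃ z, (n : ZMod m) * z = 0 ∧ x = (n' : ZMod m) * z}
      ≃ ((AddMonoidHom.mulLeft (n : ZMod m)).ker.map (AddMonoidHom.mulLeft ((n' : ZMod m)))) := by
    refine Equiv.subtypeEquivRight (fun x => ?_)
    simp only [AddSubgroup.mem_map, AddMonoidHom.mem_ker]
    constructor
    · rintro ⟨z, hz, rfl⟩; exact ⟨z, hz, rfl⟩
    · rintro ⟨z, hz, rfl⟩; exact ⟨z, hz, rfl⟩
  rw [Nat.card_congr h1, Nat.card_congr h2]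
  exact card_map_mulLeft_ker m n n' hn hd

end TorsCard

section ACard

variable {H : Type*} [Group H] (m : ℕ) [NeZero m] (A : Subgroup H)
  (e : ↥A ≃* Multiplicative (ZMod m) × Multiplicative (ZMod m))

omit [NeZero m] in
private lemma prod_tors_split (n : ℕ) :
    ∀ z : Multiplicative (ZMod m) × Multiplicative (ZMod m),
      z ^ n = 1 ↔ (z.1 ^ n = 1 ∧ z.2 ^ n = 1) := by
  intro z
  simp [Prod.ext_iff]

include e in
private lemma card_A_tors (n : ℕ) (hn : n ∣ m) :
    Nat.card {x : H // x ∈ A ∧ x ^ n = 1} = n * n := by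
  have h0 : {x : H // x ∈ A ∧ x ^ n = 1} ≃ {y : ↥A // y ^ n = 1} :=
    { toFun := fun x => ⟨⟨x.1, x.2.1⟩, by
        apply Subtype.ext
        rw [SubmonoidClass.coe_pow]
        exact x.2.2⟩
      invFun := fun y => ⟨y.1.1, y.1.2, by
        have := y.2
        have h := congrArg (Subtype.val) this
        rw [SubmonoidClass.coe_pow] at h
        exact h⟩
      left_inv := fun x => rfl
      right_inv := fun y => rfl }
  have h1 := equivTors e n
  have h2 : {z : Multiplicative (ZMod m) × Multiplicative (ZMod m) // z ^ n = 1}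
      ≃ {u : Multiplicative (ZMod m) // u ^ n = 1} × {v : Multiplicative (ZMod m) // v ^ n = 1} :=
    (Equiv.subtypeEquivRight (prod_tors_split m n)).trans
      (Equiv.subtypeProdEquivProd (p := fun u : Multiplicative (ZMod m) => u ^ n = 1)
        (q := fun v : Multiplicative (ZMod m) => v ^ n = 1))
  rw [Nat.card_congr (h0.trans (h1.trans h2)), Nat.card_prod,
    card_mult_tors m n hn]

include e in
private lemma card_A_pow_image (n n' : ℕ) (hn : n ∣ m) (hd : n' ∣ n) :
    Nat.card {x : H // ∃ g, (g ∈ A ∧ g ^ n = 1) ∧ x = g ^ n'} * (n' * n') = n * n := by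
  have h0 : {x : H // ∃ g, (g ∈ A ∧ g ^ n = 1) ∧ x = g ^ n'}
      ≃ {y : ↥A // ∃ w, w ^ n = 1 ∧ y = w ^ n'} :=
    { toFun := fun x => ⟨⟨x.1, by
        obtain ⟨g, ⟨hgA, _⟩, hx⟩ := x.2
        rw [hx]; exact pow_mem hgA n'⟩, by
        obtain ⟨g, ⟨hgA, hgn⟩, hx⟩ := x.2
        refine ⟨⟨g, hgA⟩, ?_, ?_⟩
        · apply Subtype.ext; rw [SubmonoidClass.coe_pow]; exact hgn
        · apply Subtype.ext; rw [SubmonoidClass.coe_pow]; exact hx⟩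
      invFun := fun y => ⟨y.1.1, by
        obtain ⟨w, hw, hyw⟩ := y.2
        refine ⟨w.1, ⟨w.2, ?_⟩, ?_⟩
        · have h := congrArg (Subtype.val) hw
          rw [SubmonoidClass.coe_pow] at h; exact h
        · have h := congrArg (Subtype.val) hyw
          rw [SubmonoidClass.coe_pow] at h; exact h⟩
      left_inv := fun x => rfl
      right_inv := fun y => rfl }
  have h1 := equivPowImage e n n'
  have hsplit : ∀ z : Multiplicative (ZMod m) × Multiplicative (ZMod m),
      (∃ w, w ^ n = 1 ∧ z = w ^ n') ↔
      ((∃ w1, w1 ^ n = 1 ∧ z.1 = w1 ^ n') ∧ (∃ w2, w2 ^ n = 1 ∧ z.2 = w2 ^ n')) := by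
    intro z
    constructor
    · rintro ⟨w, hw, rfl⟩
      rw [prod_tors_split m n] at hw
      exact ⟨⟨w.1, hw.1, rfl⟩, ⟨w.2, hw.2, rfl⟩⟩
    · rintro ⟨⟨w1, hw1, hz1⟩, ⟨w2, hw2, hz2⟩⟩
      refine ⟨(w1, w2), ?_, ?_⟩
      · rw [prod_tors_split m n]; exact ⟨hw1, hw2⟩
      · rw [Prod.ext_iff]; exact ⟨hz1, hz2⟩
  have h2 : {z : Multiplicative (ZMod m) × Multiplicative (ZMod m) // ∃ w, w ^ n = 1 ∧ z = w ^ n'}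
      ≃ {u : Multiplicative (ZMod m) // ∃ w, w ^ n = 1 ∧ u = w ^ n'}
        × {v : Multiplicative (ZMod m) // ∃ w, w ^ n = 1 ∧ v = w ^ n'} :=
    (Equiv.subtypeEquivRight hsplit).trans
      (Equiv.subtypeProdEquivProd
        (p := fun u : Multiplicative (ZMod m) => ∃ w, w ^ n = 1 ∧ u = w ^ n')
        (q := fun v : Multiplicative (ZMod m) => ∃ w, w ^ n = 1 ∧ v = w ^ n'))
  rw [Nat.card_congr (h0.trans (h1.trans h2)), Nat.card_prod]
  have hc := card_mult_pow_image m n n' hn hd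
  nlinarith [hc]

end ACard

/-! ### Group-theoretic helpers -/

section GroupHelpers

open Subgroup MulAction

variable {G : Type*} [Group G]

/-- conjugation of a subgroup -/
private def cj (g : G) (S : Subgroup G) : Subgroup G := S.map (MulAut.conj g).toMonoidHom

private lemma mem_cj {g x : G} {S : Subgroup G} : x ∈ cj g S ↔ g⁻¹ * x * g ∈ S := by
  simp only [cj, Subgroup.mem_map, MulEquiv.coe_toMonoidHom, MulAut.conj_apply]
  constructor
  · rintro ⟨y, hy, rfl⟩; group; simpa using hy
  · intro h; exact ⟨g⁻¹ * x * g, h, by group⟩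

private lemma cj_mem {g x : G} {S : Subgroup G} (hx : x ∈ S) : g * x * g⁻¹ ∈ cj g S := by
  rw [mem_cj]; group; simpa using hx

private lemma cj_cj (g h : G) (S : Subgroup G) : cj g (cj h S) = cj (g * h) S := by
  ext x; simp [mem_cj, mul_inv_rev, mul_assoc]

private lemma cj_one (S : Subgroup G) : cj 1 S = S := by
  ext x; simp [mem_cj]

private lemma card_cj (g : G) (S : Subgroup G) : Nat.card (cj g S) = Nat.card S :=
  (Nat.card_congr (Subgroup.equivMapOfInjective S _ (MulAut.conj g).injective).toEquiv).symm

private lemma cj_mono (g : G) {S T : Subgroup G} (h : S ≤ T) : cj g S ≤ cj g T :=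
  Subgroup.map_mono h

private lemma cj_inf (g : G) (S T : Subgroup G) : cj g (S ⊓ T) = cj g S ⊓ cj g T := by
  ext x; simp [mem_cj]

private lemma cj_of_normal {g : G} {S : Subgroup G} (hS : S.Normal) : cj g S = S := by
  ext x
  rw [mem_cj]
  constructor
  · intro h
    have := hS.conj_mem _ h g
    group at this
    simpa using this
  · intro h
    have := hS.conj_mem _ h g⁻¹
    group at this
    simpa using this

variable {V : Type*} [MulAction G V]

private lemma cj_stab (g : G) (x : V) :
    cj g (MulAction.stabilizer G x) = MulAction.stabilizer G (g • x) :=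
  (MulAction.stabilizer_smul_eq_stabilizer_map_conj g x).symm

/-- first isomorphism style cardinality: `|K| = |K ⊓ L| * |image of K in G/L|`. -/
private lemma card_eq_inf_mul_map (L K : Subgroup G) [hL : L.Normal] :
    Nat.card K = Nat.card (K ⊓ L : Subgroup G) *
      Nat.card (K.map (QuotientGroup.mk' L)) := by
  set φ := (QuotientGroup.mk' L).comp K.subtype with hφ
  have hker : φ.ker = (K ⊓ L).subgroupOf K := by
    ext ⟨x, hx⟩
    simp only [MonoidHom.mem_ker, hφ, MonoidHom.coe_comp, Function.comp_apply,
      Subgroup.coe_subtype, Subgroup.mem_subgroupOf, Subgroup.mem_inf]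
    rw [QuotientGroup.mk'_apply, QuotientGroup.eq_one_iff]
    simp [hx]
  have hrange : φ.range = K.map (QuotientGroup.mk' L) := by
    ext q
    simp only [MonoidHom.mem_range, Subgroup.mem_map, hφ, MonoidHom.coe_comp,
      Function.comp_apply, Subgroup.coe_subtype]
    constructor
    · rintro ⟨⟨x, hx⟩, rfl⟩; exact ⟨x, hx, rfl⟩
    · rintro ⟨x, hx, rfl⟩; exact ⟨⟨x, hx⟩, rfl⟩
  have h1 : Nat.card K = Nat.card (↥K ⧸ φ.ker) * Nat.card φ.ker :=
    Subgroup.card_eq_card_quotient_mul_card_subgroup φ.ker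
  have h2 : Nat.card (↥K ⧸ φ.ker) = Nat.card φ.range :=
    Nat.card_congr (QuotientGroup.quotientKerEquivRange φ).toEquiv
  have h3 : Nat.card φ.ker = Nat.card (K ⊓ L : Subgroup G) := by
    rw [hker]
    exact Nat.card_congr (Subgroup.subgroupOfEquivOfLe inf_le_left).toEquiv
  rw [h1, h2, h3, hrange, mul_comm]

/-- orbit-stabilizer for the action of a subgroup. -/
private lemma os_card (K : Subgroup G) (y : V) :
    Nat.card (MulAction.orbit K y) *
      Nat.card (K ⊓ MulAction.stabilizer G y : Subgroup G) = Nat.card K := by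
  have h1 : Nat.card K = Nat.card (↥K ⧸ MulAction.stabilizer ↥K y) *
      Nat.card (MulAction.stabilizer ↥K y) :=
    Subgroup.card_eq_card_quotient_mul_card_subgroup _
  have h2 : Nat.card (MulAction.orbit ↥K y) = Nat.card (↥K ⧸ MulAction.stabilizer ↥K y) :=
    Nat.card_congr (MulAction.orbitEquivQuotientStabilizer ↥K y)
  have hst : MulAction.stabilizer ↥K y = (K ⊓ MulAction.stabilizer G y).subgroupOf K := by
    ext k
    simp only [MulAction.mem_stabilizer_iff, Subgroup.mem_subgroupOf, Subgroup.mem_inf]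
    constructor
    · intro h; exact ⟨k.2, h⟩
    · intro h; exact h.2
  have h3 : Nat.card (MulAction.stabilizer ↥K y)
      = Nat.card (K ⊓ MulAction.stabilizer G y : Subgroup G) := by
    rw [hst]
    exact Nat.card_congr (Subgroup.subgroupOfEquivOfLe inf_le_left).toEquiv
  rw [← h2, h3] at h1
  omega

/-- every `p`-subgroup is contained in a normal subgroup of full `p`-multiplicity order. -/
private lemma pgroup_le_normal {p : ℕ} [Fact p.Prime] [Finite G] {R P : Subgroup G}
    (hR : R.Normal)
    (hRcard : Nat.card R = p ^ ((Nat.card G).factorization p))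
    (hP : IsPGroup p P) : P ≤ R := by
  obtain ⟨SP, hSP⟩ := hP.exists_le_sylow
  obtain ⟨S₀, hS₀⟩ := (IsPGroup.of_card hRcard).exists_le_sylow
  obtain ⟨g, hg⟩ := MulAction.exists_smul_eq G S₀ SP
  have hRSP : R ≤ (SP : Subgroup G) := by
    intro x hx
    have hy : g⁻¹ * x * g ∈ R := by
      have := hR.conj_mem x hx g⁻¹
      group at this
      simpa using this
    have : g⁻¹ * x * g ∈ (S₀ : Subgroup G) := hS₀ hy
    have hcoe : ((g • S₀ : Sylow p G) : Subgroup G)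
        = S₀.toSubgroup.map (MulAut.conj g).toMonoidHom := by
      rw [Sylow.smul_def, Sylow.pointwise_smul_def, Subgroup.pointwise_smul_def]
      rfl
    rw [← hg, hcoe]
    refine ⟨g⁻¹ * x * g, this, ?_⟩
    show (MulAut.conj g) (g⁻¹ * x * g) = x
    rw [MulAut.conj_apply]
    group
  have hcard : Nat.card (SP : Subgroup G) ≤ Nat.card R := by
    rw [hRcard, SP.card_eq_multiplicity]
  have : R = (SP : Subgroup G) := Subgroup.eq_of_le_of_card_ge hRSP hcard
  rw [this] at *
  exact hSP.trans (le_of_eq rfl)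

/-- existence of a Sylow subgroup of a subgroup, as a subgroup of `G`. -/
private lemma exists_sylow_le (p : ℕ) [Fact p.Prime] [Finite G] (K : Subgroup G) :
    ∃ P : Subgroup G, P ≤ K ∧ Nat.card P = p ^ ((Nat.card K).factorization p) := by
  obtain ⟨S⟩ := (Sylow.nonempty : Nonempty (Sylow p ↥K))
  refine ⟨(S : Subgroup ↥K).map K.subtype, Subgroup.map_subtype_le _, ?_⟩
  have h1 : Nat.card ((S : Subgroup ↥K).map K.subtype) = Nat.card (S : Subgroup ↥K) :=
    (Nat.card_congr (Subgroup.equivMapOfInjective _ _ (K.subtype_injective)).toEquiv).symm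
  rw [h1, S.card_eq_multiplicity]

end GroupHelpers

/-! ### Arc-transitivity helpers -/

/-- `Γ` is `(H,s)`-arc-transitive: `H` is transitive on the set of `s`-arcs. -/
def ArcTrans (H : Type*) {V : Type*} [Group H] [MulAction H V]
    (r : V → V → Prop) (s : ℕ) : Prop :=
  ∀ a b : Fin (s + 1) → V, (∀ i : Fin s, r (a i.castSucc) (a i.succ)) →
    (∀ i : Fin s, r (b i.castSucc) (b i.succ)) → ∃ h : H, ∀ i, h • a i = b i

section ArcT

variable {H V : Type*} [Group H] [MulAction H V] {r : V → V → Prop}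

private lemma arcT1 (h : ArcTrans H r 1) {u v u' v' : V} (h1 : r u v) (h2 : r u' v') :
    ∃ g : H, g • u = u' ∧ g • v = v' := by
  obtain ⟨g, hg⟩ := h ![u, v] ![u', v']
    (fun i => by fin_cases i <;> simpa using h1)
    (fun i => by fin_cases i <;> simpa using h2)
  exact ⟨g, by simpa using hg 0, by simpa using hg 1⟩

private lemma arcT2 (h : ArcTrans H r 2) {u v w u' v' w' : V}
    (h1 : r u v) (h1' : r v w) (h2 : r u' v') (h2' : r v' w') :
    ∃ g : H, g • u = u' ∧ g • v = v' ∧ g • w = w' := by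
  obtain ⟨g, hg⟩ := h ![u, v, w] ![u', v', w']
    (fun i => by fin_cases i <;> simp_all)
    (fun i => by fin_cases i <;> simp_all)
  exact ⟨g, by simpa using hg 0, by simpa using hg 1, by simpa using hg 2⟩

private lemma arcT3 (h : ArcTrans H r 3) {t u v w t' u' v' w' : V}
    (h1 : r t u) (h2 : r u v) (h3 : r v w) (h1' : r t' u') (h2' : r u' v') (h3' : r v' w') :
    ∃ g : H, g • t = t' ∧ g • u = u' ∧ g • v = v' ∧ g • w = w' := by
  obtain ⟨g, hg⟩ := h ![t, u, v, w] ![t', u', v', w']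
    (fun i => by fin_cases i <;> simp_all [show ((2 : Fin 3).castSucc : Fin 4) = 2 from rfl])
    (fun i => by fin_cases i <;> simp_all [show ((2 : Fin 3).castSucc : Fin 4) = 2 from rfl])
  exact ⟨g, by simpa using hg 0, by simpa using hg 1, by simpa using hg 2, by simpa using hg 3⟩

end ArcT

/-- If `L ⊴ H` is vertex-transitive, `L_v` has a normal subgroup `A ≅ C_m × C_m`, and
there is a prime `r` dividing `m` with `r ∤ [L_v : A]` and `v_r(|H|/|L|) < v_r(m)`,
then `s ≤ 2`. -/
theorem s_le_two_of_normal_Cm_sq {V H : Type*} [Fintype V] [Group H] [Finite H]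
    [MulAction H V] [FaithfulSMul H V]
    (r : V → V → Prop) (hirr : Irreflexive r) (hanti : ∀ u w, r u w → ¬ r w u)
    (hact : ∀ (h : H) (u w : V), r u w → r (h • u) (h • w))
    (hconn : (SimpleGraph.fromRel r).Connected)
    (harc : ∃ u w : V, r u w)
    (hvt : ∀ u w : V, ∃ h : H, h • u = w)
    (s : ℕ) (hs : 2 ≤ s)
    (hkt : ∀ k, 1 ≤ k → k ≤ s → ArcTrans H r k)
    (L : Subgroup H) (hLnorm : L.Normal)
    (hLtrans : ∀ u w : V, ∃ g ∈ L, g • u = w)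
    (v : V) (m : ℕ) (hm : 2 ≤ m)
    (A : Subgroup H) (hAle : A ≤ L ⊓ MulAction.stabilizer H v)
    (hAnorm : (A.subgroupOf (L ⊓ MulAction.stabilizer H v)).Normal)
    (hAiso : Nonempty (A ≃* Multiplicative (ZMod m) × Multiplicative (ZMod m)))
    (p : ℕ) (hp : p.Prime) (hpm : p ∣ m)
    (hpidx : ¬ p ∣ A.relIndex (L ⊓ MulAction.stabilizer H v))
    (hpval : (L.index).factorization p < m.factorization p) :
    s ≤ 2 := by
  by_contra hs3'
  have hs3 : 3 ≤ s := by omega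
  haveI : Fact p.Prime := ⟨hp⟩
  haveI : NeZero m := ⟨by omega⟩
  obtain ⟨e⟩ := hAiso
  classical
  -- abbreviations
  set st : V → Subgroup H := fun x => MulAction.stabilizer H x with hstdef
  set Lv : Subgroup H := L ⊓ st v with hLv
  -- transitivity extraction
  have T1 : ∀ {u v u' v' : V}, r u v → r u' v' →
      ∃ g : H, g • u = u' ∧ g • v = v' :=
    fun h1 h2 => arcT1 (hkt 1 (by omega) (by omega)) h1 h2
  have T2 : ∀ {u v w u' v' w' : V}, r u v → r v w → r u' v' → r v' w' →
      ∃ g : H, g • u = u' ∧ g • v = v' ∧ g • w = w' :=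
    fun h1 h1' h2 h2' => arcT2 (hkt 2 (by omega) (by omega)) h1 h1' h2 h2'
  have T3 : ∀ {t u v w t' u' v' w' : V}, r t u → r u v → r v w →
      r t' u' → r u' v' → r v' w' →
      ∃ g : H, g • t = t' ∧ g • u = u' ∧ g • v = v' ∧ g • w = w' :=
    fun h1 h2 h3 h1' h2' h3' => arcT3 (hkt 3 (by omega) hs3) h1 h2 h3 h1' h2' h3' 
  -- every vertex has an out-neighbour
  have outEx : ∀ x : V, ∃ y, r x y := by
    obtain ⟨u0, w0, h0⟩ := harc
    intro x
    obtain ⟨g, hg⟩ := hvt u0 x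
    exact ⟨g • w0, hg ▸ hact g _ _ h0⟩
  -- degree
  set Γo : V → Set V := fun x => {y : V | r x y} with hΓo
  set d : ℕ := Nat.card (Γo v) with hd
  have deg_eq : ∀ x : V, Nat.card (Γo x) = d := by
    intro x
    obtain ⟨g, hg⟩ := hvt v x
    have himg : (fun z => g • z) '' Γo v = Γo x := by
      ext z
      constructor
      · rintro ⟨w, hw, rfl⟩
        have := hact g v w hw
        rwa [hg] at this
      · intro hz
        refine ⟨g⁻¹ • z, ?_, by simp⟩
        have := hact g⁻¹ x z hz
        rwa [← hg, inv_smul_smul] at this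
    rw [← himg, Nat.card_image_of_injective (MulAction.injective g)]
  have d_pos : 0 < d := by
    obtain ⟨y, hy⟩ := outEx v
    have : Nonempty (Γo v) := ⟨⟨y, hy⟩⟩
    exact Nat.card_pos
  -- the path v → v2 → v3 → v4
  obtain ⟨v2, hv2⟩ := outEx v
  obtain ⟨v3, hv3⟩ := outEx v2
  obtain ⟨v4, hv4⟩ := outEx v3
  obtain ⟨g₀, hg₀⟩ := hvt v v2
  -- basic numerology
  set a : ℕ := m.factorization p with ha
  have ha1 : 1 ≤ a := hp.factorization_pos_of_dvd (by omega) hpm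
  have hpa_m : p ^ a ∣ m := Nat.ordProj_dvd m p
  have hp1 : 1 < p := hp.one_lt
  -- commutativity inside A
  have hcommA : ∀ x, x ∈ A → ∀ y, y ∈ A → x * y = y * x := by
    intro x hx y hy
    have h2 : (⟨x, hx⟩ : ↥A) * ⟨y, hy⟩ = ⟨y, hy⟩ * ⟨x, hx⟩ := by
      apply e.injective
      rw [map_mul, map_mul, mul_comm]
    exact congrArg Subtype.val h2
  -- the subgroup R (the Sylow p-subgroup of A)
  set R : Subgroup H :=
    { carrier := {x : H | x ∈ A ∧ x ^ p ^ a = 1}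
      one_mem' := ⟨A.one_mem, one_pow _⟩
      mul_mem' := by
        rintro x y ⟨hxA, hx⟩ ⟨hyA, hy⟩
        refine ⟨A.mul_mem hxA hyA, ?_⟩
        have hc : Commute x y := hcommA x hxA y hyA
        rw [hc.mul_pow, hx, hy, one_mul]
      inv_mem' := by
        rintro x ⟨hxA, hx⟩
        exact ⟨A.inv_mem hxA, by rw [inv_pow, hx, inv_one]⟩ } with hR
  have hRmem : ∀ x : H, x ∈ R ↔ (x ∈ A ∧ x ^ p ^ a = 1) := fun x => Iff.rfl
  have hRA : R ≤ A := fun x hx => ((hRmem x).1 hx).1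
  have hRLv : R ≤ Lv := le_trans hRA hAle
  have hcardR : Nat.card R = p ^ a * p ^ a := by
    rw [show Nat.card R = Nat.card {x : H // x ∈ A ∧ x ^ p ^ a = 1} from
      Nat.card_congr (Equiv.subtypeEquivRight fun x => hRmem x)]
    exact card_A_tors m A e (p ^ a) hpa_m
  have hcardRpow : Nat.card R = p ^ (a + a) := by rw [hcardR, pow_add]
  -- cardinality of Lv
  have cardpos : ∀ K : Subgroup H, 0 < Nat.card K := fun K => Nat.card_pos
  have hcardA : Nat.card A = m * m := by
    rw [Nat.card_congr e.toEquiv, Nat.card_prod,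
      Nat.card_congr (Multiplicative.toAdd (α := ZMod m)), Nat.card_zmod]
  have hALv : Nat.card A * A.relIndex Lv = Nat.card Lv := by
    have h1 : Nat.card (A.subgroupOf Lv) * (A.subgroupOf Lv).index = Nat.card Lv :=
      Subgroup.card_mul_index _
    have h2 : Nat.card (A.subgroupOf Lv) = Nat.card A :=
      Nat.card_congr (Subgroup.subgroupOfEquivOfLe hAle).toEquiv
    rw [h2] at h1
    exact h1
  have hrelpos : A.relIndex Lv ≠ 0 := by
    intro h0
    have h' := hALv
    rw [h0, mul_zero] at h'
    have := cardpos Lv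
    omega
  have νLv : (Nat.card Lv).factorization p = a + a := by
    have hm0 : m ≠ 0 := by omega
    have hrel0 : (A.relIndex Lv).factorization p = 0 :=
      Nat.factorization_eq_zero_of_not_dvd hpidx
    have hc : Nat.card Lv = m * m * A.relIndex Lv := by rw [← hALv, hcardA]
    rw [hc, nu_mul p (by positivity) hrelpos, nu_mul p hm0 hm0, hrel0, ← ha]
    omega
  -- conjugation stability of R
  have hRconj : ∀ g, g ∈ Lv → ∀ y, y ∈ R → g * y * g⁻¹ ∈ R := by
    intro g hg y hy
    obtain ⟨hyA, hyp⟩ := (hRmem y).1 hy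
    have hyLv : y ∈ Lv := hRLv hy
    have hconj : g * y * g⁻¹ ∈ A := by
      have := hAnorm.conj_mem ⟨y, hyLv⟩ (by simpa [Subgroup.mem_subgroupOf] using hyA) ⟨g, hg⟩
      simpa [Subgroup.mem_subgroupOf] using this
    refine (hRmem _).2 ⟨hconj, ?_⟩
    rw [conj_pow, hyp, mul_one, mul_inv_cancel]
  -- p-subgroups of Lv are inside R
  have pSubLeR : ∀ P : Subgroup H, P ≤ Lv → (∃ k, Nat.card P = p ^ k) → P ≤ R := by
    intro P hPL ⟨k, hPcard⟩
    set R' : Subgroup ↥Lv := R.subgroupOf Lv with hR'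
    have hR'norm : R'.Normal := by
      constructor
      intro n hn g
      rw [Subgroup.mem_subgroupOf] at hn ⊢
      have hc : ((g * n * g⁻¹ : ↥Lv) : H) = (g : H) * (n : H) * (g : H)⁻¹ := rfl
      rw [hc]
      exact hRconj _ g.2 _ hn
    have hR'card : Nat.card R' = p ^ ((Nat.card ↥Lv).factorization p) := by
      rw [νLv, hR', Nat.card_congr (Subgroup.subgroupOfEquivOfLe hRLv).toEquiv, hcardRpow]
    have hP' : IsPGroup p (P.subgroupOf Lv) := by
      apply IsPGroup.of_card (p := p) (n := k)
      rw [Nat.card_congr (Subgroup.subgroupOfEquivOfLe hPL).toEquiv, hPcard]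
    have hle : P.subgroupOf Lv ≤ R' := pgroup_le_normal hR'norm hR'card hP'
    intro x hx
    have : (⟨x, hPL hx⟩ : ↥Lv) ∈ P.subgroupOf Lv := by
      rwa [Subgroup.mem_subgroupOf]
    have := hle this
    rwa [Subgroup.mem_subgroupOf] at this
  -- stabilizer of v normalizes R
  have NRW : ∀ k : H, k ∈ st v → cj k R = R := by
    intro k hk
    have hkv : k • v = v := hk
    have h1 : cj k R ≤ Lv := by
      calc cj k R ≤ cj k Lv := cj_mono k hRLv
        _ = L ⊓ st (k • v) := by rw [hLv, cj_inf, cj_of_normal hLnorm, cj_stab]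
        _ = Lv := by rw [hkv, hLv]
    have h2 : cj k R ≤ R := pSubLeR _ h1 ⟨a + a, by rw [card_cj, hcardRpow]⟩
    exact Subgroup.eq_of_le_of_card_ge h2 (le_of_eq (card_cj k R).symm)
  -- R₂, the Sylow subgroup at v2
  set R₂ : Subgroup H := cj g₀ R with hR₂
  have hR₂le : R₂ ≤ L ⊓ st v2 := by
    calc R₂ ≤ cj g₀ Lv := cj_mono g₀ hRLv
      _ = L ⊓ st (g₀ • v) := by rw [hLv, cj_inf, cj_of_normal hLnorm, cj_stab]
      _ = L ⊓ st v2 := by rw [hg₀]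
  set j : ℕ := (Nat.card (R ⊓ R₂ : Subgroup H)).factorization p with hj
  have hinfdvd : Nat.card (R ⊓ R₂ : Subgroup H) ∣ p ^ (a + a) := by
    rw [← hcardRpow]
    exact Subgroup.card_dvd_of_le inf_le_left
  have hjcard : Nat.card (R ⊓ R₂ : Subgroup H) = p ^ j := card_eq_pow_nu hp hinfdvd
  have hj2a : j ≤ a + a := by
    rw [hjcard] at hinfdvd
    exact (Nat.pow_dvd_pow_iff_le_right hp1).1 hinfdvd
  -- helper : conjugation invariance of W-type subgroups
  -- THE KEY CLAIM : j ≤ a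
  have K2 : j ≤ a := by
    by_contra hja'
    have hja : a < j := by omega
    set b : ℕ := a + a - j with hb
    set κ : ℕ := j - a with hκ
    have hbκ : b + κ = a := by omega
    have hκ1 : 1 ≤ κ := by omega
    have hba : b ≤ a := by omega
    have hpb_pa : p ^ b ∣ p ^ a := pow_dvd_pow p hba
    -- the subgroup W of (p^b)-th powers of R
    set W : Subgroup H :=
      { carrier := {x : H | ∃ g, (g ∈ A ∧ g ^ p ^ a = 1) ∧ x = g ^ p ^ b}
        one_mem' := ⟨1, ⟨A.one_mem, one_pow _⟩, (one_pow _).symm⟩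
        mul_mem' := by
          rintro x y ⟨g1, ⟨hg1A, hg1p⟩, rfl⟩ ⟨g2, ⟨hg2A, hg2p⟩, rfl⟩
          refine ⟨g1 * g2, ⟨A.mul_mem hg1A hg2A, ?_⟩, ?_⟩
          · have hc : Commute g1 g2 := hcommA g1 hg1A g2 hg2A
            rw [hc.mul_pow, hg1p, hg2p, one_mul]
          · have hc : Commute g1 g2 := hcommA g1 hg1A g2 hg2A
            rw [hc.mul_pow]
        inv_mem' := by
          rintro x ⟨g, ⟨hgA, hgp⟩, rfl⟩
          exact ⟨g⁻¹, ⟨A.inv_mem hgA, by rw [inv_pow, hgp, inv_one]⟩, by rw [inv_pow]⟩ } with hW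
    have hWmem : ∀ x : H, x ∈ W ↔ ∃ g, g ∈ R ∧ x = g ^ p ^ b := by
      intro x
      constructor
      · rintro ⟨g, hg, rfl⟩; exact ⟨g, (hRmem g).2 hg, rfl⟩
      · rintro ⟨g, hg, rfl⟩; exact ⟨g, (hRmem g).1 hg, rfl⟩
    have hWR : W ≤ R := by
      intro x hx
      obtain ⟨g, hg, rfl⟩ := (hWmem x).1 hx
      exact R.pow_mem hg _
    have hWcard' : Nat.card W * (p ^ b * p ^ b) = p ^ a * p ^ a := by
      rw [show Nat.card W =
        Nat.card {x : H // ∃ g, (g ∈ A ∧ g ^ p ^ a = 1) ∧ x = g ^ p ^ b} from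
        Nat.card_congr (Equiv.subtypeEquivRight fun x => Iff.rfl)]
      exact card_A_pow_image m A e (p ^ a) (p ^ b) hpa_m hpb_pa
    have hWcard : Nat.card W = p ^ (κ + κ) := by
      have hepx : κ + κ + (b + b) = a + a := by omega
      have h1 : p ^ (κ + κ) * (p ^ b * p ^ b) = p ^ a * p ^ a := by
        rw [← pow_add, ← pow_add, ← pow_add, hepx, pow_add]
      have h2 : 0 < p ^ b * p ^ b := by positivity
      exact Nat.eq_of_mul_eq_mul_right h2 (by rw [hWcard', ← h1])
    have hWgt1 : 1 < Nat.card W := by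
      rw [hWcard]
      calc 1 < p := hp1
        _ = p ^ 1 := (pow_one p).symm
        _ ≤ p ^ (κ + κ) := Nat.pow_le_pow_right (by omega) (by omega)
    -- W ≤ R₂ via the quotient argument
    have hWR₂ : W ≤ R₂ := by
      have key : ∀ g, g ∈ R → g ^ p ^ b ∈ R ⊓ R₂ := by
        intro g hg
        set N : Subgroup ↥R := (R ⊓ R₂).subgroupOf R with hN
        haveI hNnorm : N.Normal := by
          constructor
          intro n hn gg
          rw [Subgroup.mem_subgroupOf] at hn ⊢
          have hco : ((gg * n * gg⁻¹ : ↥R) : H) = (n : H) := by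
            push_cast
            have := hcommA (gg : H) (hRA gg.2) (n : H) (hRA n.2)
            rw [this]
            group
          rw [hco]
          exact hn
        have hNcard : Nat.card N = p ^ j := by
          rw [hN, Nat.card_congr (Subgroup.subgroupOfEquivOfLe inf_le_left).toEquiv, hjcard]
        have hNindex : N.index = p ^ b := by
          have h1 : Nat.card N * N.index = Nat.card ↥R := Subgroup.card_mul_index N
          rw [hNcard, hcardRpow] at h1
          have hepx : j + b = a + a := by omega
          have h2 : p ^ j * p ^ b = p ^ (a + a) := by rw [← pow_add, hepx]
          have h3 : (0:ℕ) < p ^ j := by positivity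
          exact Nat.eq_of_mul_eq_mul_left h3 (by rw [h1, ← h2])
        have hq : Nat.card (↥R ⧸ N) = p ^ b := by
          rw [← Subgroup.index_eq_card, hNindex]
        have hpow : ((⟨g, hg⟩ : ↥R)) ^ p ^ b ∈ N := by
          have h1 : (QuotientGroup.mk' N) ((⟨g, hg⟩ : ↥R) ^ p ^ b) = 1 := by
            rw [map_pow, ← hq]
            exact pow_card_eq_one'
          rwa [QuotientGroup.mk'_apply, QuotientGroup.eq_one_iff] at h1
        rw [Subgroup.mem_subgroupOf] at hpow
        have hcoe : (((⟨g, hg⟩ : ↥R) ^ p ^ b : ↥R) : H) = g ^ p ^ b := by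
          rw [SubmonoidClass.coe_pow]
        rwa [hcoe] at hpow
      intro x hx
      obtain ⟨g, hg, rfl⟩ := (hWmem x).1 hx
      exact (key g hg).2
    -- the Ω-sets
    set ΩR : Set H := {x : H | x ∈ A ∧ x ^ p ^ κ = 1} with hΩR
    have hΩRcard : Nat.card ΩR = p ^ κ * p ^ κ := by
      rw [show Nat.card ΩR = Nat.card {x : H // x ∈ A ∧ x ^ p ^ κ = 1} from rfl]
      exact card_A_tors m A e (p ^ κ) ((pow_dvd_pow p (by omega)).trans hpa_m)
    have hΩR_R : ∀ x, x ∈ ΩR → x ∈ R := by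
      rintro x ⟨hxA, hxκ⟩
      refine (hRmem x).2 ⟨hxA, ?_⟩
      have hepx : κ + (a - κ) = a := by omega
      have hx2 : x ^ p ^ a = (x ^ p ^ κ) ^ p ^ (a - κ) := by
        rw [← pow_mul, ← pow_add, hepx]
      rw [hx2, hxκ, one_pow]
    set ΩR₂ : Set H := (fun x => g₀ * x * g₀⁻¹) '' ΩR with hΩR₂
    have hconjinj : Function.Injective (fun x : H => g₀ * x * g₀⁻¹) := by
      intro x y hxy
      simp only at hxy
      exact mul_left_cancel (mul_right_cancel hxy)
    have hΩR₂card : Nat.card ΩR₂ = p ^ κ * p ^ κ := by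
      rw [hΩR₂, Nat.card_image_of_injective hconjinj, hΩRcard]
    have hΩR₂eq : ΩR₂ = {x : H | x ∈ R₂ ∧ x ^ p ^ κ = 1} := by
      ext x
      constructor
      · rintro ⟨y, ⟨hyA, hyκ⟩, rfl⟩
        constructor
        · exact cj_mem (hΩR_R y ⟨hyA, hyκ⟩)
        · rw [conj_pow, hyκ, mul_one, mul_inv_cancel]
      · rintro ⟨hxR₂, hxκ⟩
        have hx' : g₀⁻¹ * x * g₀ ∈ R := mem_cj.1 hxR₂
        obtain ⟨hyA, _⟩ := (hRmem _).1 hx'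
        refine ⟨g₀⁻¹ * x * g₀, ⟨hyA, ?_⟩, by group⟩
        have : (g₀⁻¹ * x * g₀) ^ p ^ κ = g₀⁻¹ * x ^ p ^ κ * g₀ := by
          have := conj_pow (i := p ^ κ) (a := g₀⁻¹) (b := x)
          simpa using this
        rw [this, hxκ, mul_one, inv_mul_cancel]
    -- W (as a set) is contained in ΩR₂, and they have the same size
    have hWsubΩ : (W : Set H) ⊆ ΩR₂ := by
      intro x hx
      rw [hΩR₂eq]
      obtain ⟨g, hg, rfl⟩ := (hWmem x).1 hx
      constructor
      · exact hWR₂ hx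
      · obtain ⟨_, hgp⟩ := (hRmem g).1 hg
        rw [← pow_mul, ← pow_add, hbκ, hgp]
    have hWeqΩ : (W : Set H) = ΩR₂ := by
      apply Set.eq_of_subset_of_ncard_le hWsubΩ ?_ (Set.toFinite _)
      rw [← Nat.card_coe_set_eq, ← Nat.card_coe_set_eq, hΩR₂card]
      have hcc : Nat.card (W : Set H) = Nat.card W := rfl
      rw [hcc, hWcard, pow_add]
    -- CORE : conjugation by g₀ fixes W
    have CORE : cj g₀ W = W := by
      have hle : cj g₀ W ≤ W := by
        intro x hx
        obtain ⟨w, hw, rfl⟩ := hx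
        obtain ⟨g, hg, rfl⟩ := (hWmem w).1 hw
        have hxx : (MulAut.conj g₀).toMonoidHom (g ^ p ^ b) = (g₀ * g * g₀⁻¹) ^ p ^ b := by
          show g₀ * g ^ p ^ b * g₀⁻¹ = (g₀ * g * g₀⁻¹) ^ p ^ b
          rw [conj_pow]
        rw [hxx]
        have hg2 : g₀ * g * g₀⁻¹ ∈ R₂ := cj_mem hg
        have : (g₀ * g * g₀⁻¹) ^ p ^ b ∈ ΩR₂ := by
          rw [hΩR₂eq]
          constructor
          · exact R₂.pow_mem hg2 _
          · obtain ⟨_, hgp⟩ := (hRmem g).1 hg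
            rw [← pow_mul, ← pow_add, hbκ, conj_pow, hgp, mul_one, mul_inv_cancel]
        rw [← hWeqΩ] at this
        exact this
      exact Subgroup.eq_of_le_of_card_ge hle (le_of_eq (card_cj g₀ W).symm)
    -- invariance of W under conjugation whenever R is preserved
    have hWconj : ∀ σ : H, cj σ R = R → cj σ W = W := by
      intro σ hσ
      have hle : cj σ W ≤ W := by
        intro x hx
        obtain ⟨w, hw, rfl⟩ := hx
        obtain ⟨g, hg, rfl⟩ := (hWmem w).1 hw
        have hxx : (MulAut.conj σ).toMonoidHom (g ^ p ^ b) = (σ * g * σ⁻¹) ^ p ^ b := by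
          show σ * g ^ p ^ b * σ⁻¹ = (σ * g * σ⁻¹) ^ p ^ b
          rw [conj_pow]
        rw [hxx]
        refine (hWmem _).2 ⟨σ * g * σ⁻¹, ?_, rfl⟩
        rw [← hσ]
        exact cj_mem hg
      exact Subgroup.eq_of_le_of_card_ge hle (le_of_eq (card_cj σ W).symm)
    -- transporting the invariance along equal base points
    have hsame : ∀ h1 h2 : H, h1 • v = h2 • v → cj h1 W = W → cj h2 W = W := by
      intro h1 h2 hv12 hW1
      have hst' : h1⁻¹ * h2 ∈ st v := by
        show (h1⁻¹ * h2) • v = v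
        rw [mul_smul, ← hv12, inv_smul_smul]
      have : cj h2 W = cj h1 (cj (h1⁻¹ * h2) W) := by
        rw [cj_cj]
        congr 1
        group
      rw [this, hWconj _ (NRW _ hst'), hW1]
    -- the invariant
    set Inv : V → Prop := fun x => ∃ h : H, h • v = x ∧ cj h W = W with hInv
    have base : Inv v := ⟨1, one_smul _ _, cj_one W⟩
    have hWg₀inv : cj g₀⁻¹ W = W := by
      have h0 := congrArg (cj g₀⁻¹) CORE
      rw [cj_cj, inv_mul_cancel, cj_one] at h0
      exact h0.symm
    have hedge : ∀ x y : V, (SimpleGraph.fromRel r).Adj x y → Inv x → Inv y := by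
      intro x y hadj hx
      obtain ⟨h, hhv, hhW⟩ := hx
      rw [SimpleGraph.fromRel_adj] at hadj
      obtain ⟨hne, hcase⟩ := hadj
      rcases hcase with hxy | hyx
      · -- r x y : map the arc (v,v2) to (x,y)
        obtain ⟨k, hk1, hk2⟩ := T1 hv2 hxy
        have hkW : cj k W = W := hsame h k (by rw [hhv, hk1]) hhW
        refine ⟨k * g₀, ?_, ?_⟩
        · rw [mul_smul, hg₀, hk2]
        · rw [← cj_cj, CORE, hkW]
      · -- r y x : map the arc (v,v2) to (y,x)
        obtain ⟨k, hk1, hk2⟩ := T1 hv2 hyx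
        have hkg₀v : (k * g₀) • v = x := by rw [mul_smul, hg₀, hk2]
        have hkg₀W : cj (k * g₀) W = W := hsame h (k * g₀) (by rw [hhv, hkg₀v]) hhW
        refine ⟨k, hk1, ?_⟩
        have : cj k W = cj (k * g₀) (cj g₀⁻¹ W) := by
          rw [cj_cj]
          congr 1
          group
        rw [this, hWg₀inv, hkg₀W]
    have key : ∀ x : V, Inv x := by
      have walkInd : ∀ (x y : V), (SimpleGraph.fromRel r).Walk x y → Inv x → Inv y := by
        intro x y w
        induction w with
        | nil => exact id
        | cons hadj _ ih => exact fun hx => ih (hedge _ _ hadj hx)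
      intro x
      obtain ⟨w⟩ := hconn.preconnected v x
      exact walkInd v x w base
    -- W fixes every vertex
    have hWst : ∀ x : V, W ≤ st x := by
      intro x
      obtain ⟨h, hhv, hhW⟩ := key x
      have hWv : W ≤ st v := le_trans hWR (le_trans hRLv inf_le_right)
      calc W = cj h W := hhW.symm
        _ ≤ cj h (st v) := cj_mono h hWv
        _ = st (h • v) := cj_stab h v
        _ = st x := by rw [hhv]
    have hWbot : W = ⊥ := by
      rw [Subgroup.eq_bot_iff_forall]
      intro w hw
      apply eq_of_smul_eq_smul (α := V)
      intro x
      rw [one_smul]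
      exact hWst x hw
    rw [hWbot, Subgroup.card_bot] at hWgt1
    omega
  -- ============ MAIN COUNTING ============
  -- image in H / L
  set im : Subgroup H → Subgroup (H ⧸ L) := fun K => K.map (QuotientGroup.mk' L) with him
  set c₁ : ℕ := (Nat.card (im (st v))).factorization p with hc₁def
  have hLidx : L.index ≠ 0 := Subgroup.index_ne_zero_of_finite
  have hc₁lt : c₁ < a := by
    have h1 : Nat.card (im (st v)) ∣ L.index := by
      rw [Subgroup.index_eq_card]
      exact Subgroup.card_subgroup_dvd_card _
    have h2 := nu_le_of_dvd p h1 hLidx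
    omega
  -- |st v| = |Lv| * |im (st v)|
  have hstv : Nat.card (st v) = Nat.card Lv * Nat.card (im (st v)) := by
    have h0 := card_eq_inf_mul_map L (st v)
    have h1 : Nat.card (st v ⊓ L : Subgroup H) = Nat.card Lv := by
      rw [show st v ⊓ L = Lv from inf_comm (st v) L]
    rw [h1] at h0
    exact h0
  have impos : ∀ K : Subgroup H, Nat.card (im K) ≠ 0 := fun K => (Nat.card_pos).ne'
  have νn1 : (Nat.card (st v)).factorization p = (a + a) + c₁ := by
    rw [hstv, nu_mul p (cardpos Lv).ne' (impos (st v)), νLv, ← hc₁def]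
  -- orbit identifications
  have horb1 : MulAction.orbit ↥(st v) v2 = Γo v := by
    ext z
    constructor
    · rintro ⟨⟨k, hk⟩, rfl⟩
      have h2 := hact k v v2 hv2
      rw [show k • v = v from hk] at h2
      exact h2
    · intro hz
      obtain ⟨g, hg1, hg2⟩ := T1 hv2 (show r v z from hz)
      exact ⟨⟨g, hg1⟩, hg2⟩
  have horb2 : MulAction.orbit ↥(st v ⊓ st v2) v3 = Γo v2 := by
    ext z
    constructor
    · rintro ⟨⟨k, hk⟩, rfl⟩
      have h2 := hact k v2 v3 hv3
      rw [show k • v2 = v2 from hk.2] at h2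
      exact h2
    · intro hz
      obtain ⟨g, hg1, hg2, hg3⟩ := T2 hv2 hv3 hv2 (show r v2 z from hz)
      exact ⟨⟨g, hg1, hg2⟩, hg3⟩
  have horb3 : MulAction.orbit ↥(st v ⊓ st v2 ⊓ st v3) v4 = Γo v3 := by
    ext z
    constructor
    · rintro ⟨⟨k, hk⟩, rfl⟩
      have h2 := hact k v3 v4 hv4
      rw [show k • v3 = v3 from hk.2] at h2
      exact h2
    · intro hz
      obtain ⟨g, hg1, hg2, hg3, hg4⟩ := T3 hv2 hv3 hv4 hv2 hv3 (show r v3 z from hz)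
      exact ⟨⟨g, ⟨hg1, hg2⟩, hg3⟩, hg4⟩
  -- orbit-stabilizer equations
  have E1 : d * Nat.card (st v ⊓ st v2 : Subgroup H) = Nat.card (st v) := by
    have h0 := os_card (st v) v2
    rwa [horb1, ← hd] at h0
  have E2 : d * Nat.card ((st v ⊓ st v2) ⊓ st v3 : Subgroup H)
      = Nat.card (st v ⊓ st v2 : Subgroup H) := by
    have := os_card (st v ⊓ st v2) v3
    rwa [horb2, deg_eq v2] at this
  have E3 : d ∣ Nat.card ((st v ⊓ st v2) ⊓ st v3 : Subgroup H) := by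
    have := os_card ((st v ⊓ st v2) ⊓ st v3) v4
    rw [horb3, deg_eq v3] at this
    exact ⟨_, this.symm⟩
  -- bound on ν(card (st v ⊓ st v2))
  set K₂ : Subgroup H := st v ⊓ st v2 with hK₂
  have hK₂L : Nat.card K₂ = Nat.card (K₂ ⊓ L : Subgroup H) * Nat.card (im K₂) :=
    card_eq_inf_mul_map L K₂
  have νim₂ : (Nat.card (im K₂)).factorization p ≤ c₁ := by
    have h1 : im K₂ ≤ im (st v) := Subgroup.map_mono inf_le_left
    exact nu_le_of_dvd p (Subgroup.card_dvd_of_le h1) (impos (st v))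
  have νK₂L : (Nat.card (K₂ ⊓ L : Subgroup H)).factorization p ≤ j := by
    obtain ⟨P, hPle, hPcard⟩ := exists_sylow_le p (K₂ ⊓ L : Subgroup H)
    have hPLv : P ≤ Lv := by
      rw [hLv]
      exact le_trans hPle (le_inf inf_le_right (le_trans inf_le_left (by rw [hK₂]; exact inf_le_left)))
    have hPR : P ≤ R := pSubLeR P hPLv ⟨_, hPcard⟩
    have hPR₂ : P ≤ R₂ := by
      have hPle2 : P ≤ L ⊓ st v2 := le_trans hPle
        (le_inf inf_le_right (le_trans inf_le_left (by rw [hK₂]; exact inf_le_right)))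
      have hP' : cj g₀⁻¹ P ≤ Lv := by
        calc cj g₀⁻¹ P ≤ cj g₀⁻¹ (L ⊓ st v2) := cj_mono _ hPle2
          _ = L ⊓ st (g₀⁻¹ • v2) := by rw [cj_inf, cj_of_normal hLnorm, cj_stab]
          _ = Lv := by rw [show g₀⁻¹ • v2 = v from by rw [← hg₀, inv_smul_smul], hLv]
      have hP'R : cj g₀⁻¹ P ≤ R := pSubLeR _ hP' ⟨_, by rw [card_cj, hPcard]⟩
      have := cj_mono g₀ hP'R
      rwa [cj_cj, mul_inv_cancel, cj_one] at this
    have hPinf : P ≤ R ⊓ R₂ := le_inf hPR hPR₂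
    have : Nat.card P ∣ p ^ j := by
      rw [← hjcard]
      exact Subgroup.card_dvd_of_le hPinf
    rw [hPcard] at this
    exact (Nat.pow_dvd_pow_iff_le_right hp1).1 this
  have νK₂ : (Nat.card K₂).factorization p ≤ j + c₁ := by
    rw [hK₂L, nu_mul p (cardpos _).ne' (impos K₂)]
    omega
  -- assemble the contradiction
  have hd0 : d ≠ 0 := by omega
  have hcK₂ : Nat.card K₂ ≠ 0 := (cardpos K₂).ne'
  have hc3 : Nat.card (K₂ ⊓ st v3 : Subgroup H) ≠ 0 := (cardpos _).ne'
  have νE1 : d.factorization p + (Nat.card K₂).factorization p = (a + a) + c₁ := by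
    rw [← νn1, ← E1, nu_mul p hd0 hcK₂]
  have νE2 : d.factorization p + (Nat.card (K₂ ⊓ st v3 : Subgroup H)).factorization p
      = (Nat.card K₂).factorization p := by
    rw [← E2, nu_mul p hd0 hc3]
  have νE3 : d.factorization p ≤ (Nat.card (K₂ ⊓ st v3 : Subgroup H)).factorization p :=
    nu_le_of_dvd p E3 hc3
  omega
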